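/- Let S be a C-system of ultrafilters, j : V → M = Ult(V,S) the derived ultrapower embedding. Then: (1) the projection function proj_x : O_{x} → V, f ↦ f(x), represents x in the ultrapower, for any x ∈ ⋃C; (2) the function ran_a : f ↦ ran(f) represents a; (3) the function dom_a : f ↦ dom(f) represents j[a]; (4) the identity function id_a on O_a represents (j ↾ a)^{-1}, for any a ∈ C. -/

import Mathlib

noncomputable section

namespace CSF

/-- Code a class of ZF-sets as a `ZFSet` whenever it is extensionally a set
(otherwise return `∅`). -/
def zcode (A : Set ZFSet) : ZFSet := by
  classical exact if h : ∃ z : ZFSet, z.toSet = A then h.choose else ∅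

/-- Iterated union. -/
def itUnion : ℕ → ZFSet → ZFSet
  | 0, a => a
  | n + 1, a => ZFSet.sUnion (itUnion n a)

/-- The transitive closure of a set. -/
def trcl (a : ZFSet) : ZFSet :=
  zcode {x | ∃ n : ℕ, x ∈ itUnion n a}

/-- `M` is extensional if the membership relation restricted to `M` satisfies
extensionality. -/
def Extensional (M : ZFSet) : Prop :=
  ∀ x ∈ M, ∀ y ∈ M, (∀ z ∈ M, z ∈ x ↔ z ∈ y) → x = y

/-- The Mostowski collapse map of `M`, defined by ∈-recursion:
`mos M x = {mos M y : y ∈ x ∩ M}`. -/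
def mos (M : ZFSet) : ZFSet → ZFSet :=
  ZFSet.mem_wf.fix fun x IH =>
    zcode {z | ∃ y, ∃ hy : y ∈ x, y ∈ M ∧ z = IH y hy}

/-- The function `π_M ↾ (a ∩ M)` coded as a set of Kuratowski pairs. -/
def funOf (M a : ZFSet) : ZFSet :=
  zcode {p | ∃ x, x ∈ a ∧ x ∈ M ∧ p = ZFSet.pair x (mos M x)}

/-- `O_a`: the set of restrictions `π_M ↾ (a ∩ M)` of Mostowski collapses of
extensional subsets `M ⊆ trcl(a)`. -/
def O (a : ZFSet) : Set ZFSet :=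
  {f | ∃ M : ZFSet, M ⊆ trcl a ∧ Extensional M ∧ f = funOf M a}

/-- Domain (as a class) of a coded function. -/
def zdom (f : ZFSet) : Set ZFSet := {x | ∃ y, ZFSet.pair x y ∈ f}

/-- Domain (as a set) of a coded function. -/
def zdomZ (f : ZFSet) : ZFSet := zcode (zdom f)

/-- Range (as a set) of a coded function. -/
def zranZ (f : ZFSet) : ZFSet := zcode {y | ∃ x, ZFSet.pair x y ∈ f}

/-- Application of a coded function. -/
def app (f x : ZFSet) : ZFSet :=
  zcode {z | ∃ y, ZFSet.pair x y ∈ f ∧ z ∈ y}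

/-- Restriction `f ↾ a` of a coded function; this is the standard projection
`π_{ba}(f) = f ↾ a` for `f ∈ O_b`, `a ⊆ b`. -/
def restr (f a : ZFSet) : ZFSet :=
  zcode {p | p ∈ f ∧ ∃ x y, x ∈ a ∧ p = ZFSet.pair x y}

/-- A directed set of domains: closed under subsets and (binary) unions, with
transitive union. -/
structure IsDirectedDomains (C : Set ZFSet) : Prop where
  subset_mem : ∀ a ∈ C, ∀ b : ZFSet, b ⊆ a → b ∈ C
  union_mem : ∀ a ∈ C, ∀ b ∈ C, a ∪ b ∈ C
  transitive : ∀ a ∈ C, ∀ x, x ∈ a → ∀ y, y ∈ x → ({y} : ZFSet) ∈ C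

/-- A `C`-system of filters: a family of non-trivial filters `F a` on `P(O_a)` for
`a ∈ C`, satisfying fineness, compatibility and normality. -/
structure IsCSystemOfFilters (C : Set ZFSet) (F : ZFSet → Set (Set ZFSet)) : Prop where
  directed : IsDirectedDomains C
  sets_subset : ∀ a ∈ C, ∀ A ∈ F a, A ⊆ O a
  top_mem : ∀ a ∈ C, O a ∈ F a
  empty_not_mem : ∀ a ∈ C, (∅ : Set ZFSet) ∉ F a
  inter_mem : ∀ a ∈ C, ∀ A ∈ F a, ∀ B ∈ F a, A ∩ B ∈ F a
  superset_mem : ∀ a ∈ C, ∀ A ∈ F a, ∀ B : Set ZFSet, A ⊆ B → B ⊆ O a → B ∈ F a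
  fineness : ∀ a ∈ C, ∀ x, x ∈ a → {f | f ∈ O a ∧ x ∈ zdom f} ∈ F a
  compat : ∀ a ∈ C, ∀ b ∈ C, a ⊆ b → ∀ A : Set ZFSet, A ⊆ O a →
    (A ∈ F a ↔ {f | f ∈ O b ∧ restr f a ∈ A} ∈ F b)
  normality : ∀ a ∈ C, ∀ A : Set ZFSet, A ⊆ O a → (O a \ A) ∉ F a →
    ∀ u : ZFSet → ZFSet, (∀ f ∈ A, ∃ x ∈ zdom f, u f = app f x ∨ u f ∈ app f x) →
    ∃ b ∈ C, a ⊆ b ∧ ∃ B : Set ZFSet, B ⊆ {f | f ∈ O b ∧ restr f a ∈ A} ∧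
      (O b \ B) ∉ F b ∧ ∃ y, y ∈ b ∧ ∀ f ∈ B, u (restr f a) = app f y

/-- A `C`-system of ultrafilters. -/
structure IsCSystemOfUltrafilters (C : Set ZFSet) (F : ZFSet → Set (Set ZFSet))
    extends IsCSystemOfFilters C F : Prop where
  ultra : ∀ a ∈ C, ∀ A : Set ZFSet, A ⊆ O a → (A ∈ F a ∨ (O a \ A) ∈ F a)

/-- Representatives of elements of the ultrapower `Ult(V,S)`: a pair of a domain
`a ∈ C` and a function `u : O_a → V`. -/
abbrev PreU : Type 1 := ZFSet × (ZFSet → ZFSet)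

/-- Equality of ultrapower representatives: `u =_S v`. -/
def eqU (F : ZFSet → Set (Set ZFSet)) (p q : PreU) : Prop :=
  {f | f ∈ O (p.1 ∪ q.1) ∧ p.2 (restr f p.1) = q.2 (restr f q.1)} ∈ F (p.1 ∪ q.1)

/-- Membership of ultrapower representatives: `u ∈_S v`. -/
def memU (F : ZFSet → Set (Set ZFSet)) (p q : PreU) : Prop :=
  {f | f ∈ O (p.1 ∪ q.1) ∧ p.2 (restr f p.1) ∈ q.2 (restr f q.1)} ∈ F (p.1 ∪ q.1)

/-- The constant function `c_x`, representing `j(x)`. -/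
def jrep (x : ZFSet) : PreU := (∅, fun _ => x)

/-- The projection `proj_x : O_{{x}} → V`, `f ↦ f(x)`, representing `x`. -/
def projRep (x : ZFSet) : PreU := ({x}, fun f => app f x)

end CSF

open scoped ZFSet

namespace CSF
set_option maxHeartbeats 1000000

theorem ZFSet.mem_toSet (a u : _root_.ZFSet.{0}) : a ∈ u.toSet ↔ a ∈ u := Iff.rfl

theorem ZFSet.toSet_injective : Function.Injective _root_.ZFSet.toSet.{0} :=
  SetLike.coe_injective

noncomputable local instance (f : ZFSet → ZFSet) : ZFSet.Definable₁ f :=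
  Classical.allZFSetDefinable _

theorem zcode_toSet {A : Set ZFSet} (h : ∃ z : ZFSet.{0}, z.toSet = A) :
    (zcode A).toSet = A := by
  rw [zcode]; rw [dif_pos h]; exact h.choose_spec

theorem mem_zcode {A : Set ZFSet} (h : ∃ z : ZFSet.{0}, z.toSet = A) {y : ZFSet.{0}} :
    y ∈ zcode A ↔ y ∈ A := by
  rw [← ZFSet.mem_toSet, zcode_toSet h]

theorem zcode_of_toSet (z : ZFSet.{0}) : zcode z.toSet = z :=
  ZFSet.toSet_injective (zcode_toSet ⟨z, rfl⟩)

theorem zcode_sub {A : Set ZFSet} {w : ZFSet.{0}} (hsub : A ⊆ w.toSet) :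
    ∃ z : ZFSet.{0}, z.toSet = A := by
  classical
  refine ⟨ZFSet.sep (fun y => y ∈ A) w, ?_⟩
  ext y
  simp only [ZFSet.mem_toSet, ZFSet.mem_sep]
  exact ⟨fun h => h.2, fun h => ⟨(ZFSet.mem_toSet _ _).mp (hsub h), h⟩⟩

/-! ### mos -/

theorem mos_def (M x : ZFSet.{0}) :
    mos M x = zcode {z | ∃ y, y ∈ x ∧ y ∈ M ∧ z = mos M y} := by
  rw [mos, WellFounded.fix_eq]
  congr 1
  ext z
  constructor
  · rintro ⟨y, hy, hM, rfl⟩; exact ⟨y, hy, hM, rfl⟩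
  · rintro ⟨y, hy, hM, rfl⟩; exact ⟨y, hy, hM, rfl⟩

theorem mos_class_isSet (M x : ZFSet.{0}) :
    ∃ z : ZFSet.{0}, z.toSet = {z | ∃ y, y ∈ x ∧ y ∈ M ∧ z = mos M y} := by
  refine ⟨ZFSet.image (mos M) (ZFSet.sep (fun y => y ∈ M) x), ?_⟩
  ext z
  simp only [ZFSet.mem_toSet, ZFSet.mem_image, ZFSet.mem_sep, Set.mem_setOf_eq]
  constructor
  · rintro ⟨y, ⟨hy, hM⟩, rfl⟩; exact ⟨y, hy, hM, rfl⟩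
  · rintro ⟨y, hy, hM, rfl⟩; exact ⟨y, ⟨hy, hM⟩, rfl⟩

theorem mem_mos {M x z : ZFSet.{0}} :
    z ∈ mos M x ↔ ∃ y, y ∈ x ∧ y ∈ M ∧ z = mos M y := by
  rw [mos_def]; exact mem_zcode (mos_class_isSet M x)

theorem mos_inj {M : ZFSet.{0}} (hM : Extensional M) :
    ∀ x, x ∈ M → ∀ y, y ∈ M → mos.{0,0} M x = mos.{0,0} M y → x = y := by
  intro x
  induction x using ZFSet.inductionOn with
  | _ x IH =>
    intro hxM y hyM hmos
    refine hM x hxM y hyM fun z hzM => ?_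
    constructor
    · intro hzx
      have h1 : mos M z ∈ mos M y := by
        rw [← hmos]; exact mem_mos.mpr ⟨z, hzx, hzM, rfl⟩
      obtain ⟨w, hwy, hwM, hw⟩ := mem_mos.mp h1
      rwa [IH z hzx hzM w hwM hw]
    · intro hzy
      have h1 : mos M z ∈ mos M x := by
        rw [hmos]; exact mem_mos.mpr ⟨z, hzy, hzM, rfl⟩
      obtain ⟨w, hwx, hwM, hw⟩ := mem_mos.mp h1
      rwa [← IH w hwx hwM z hzM hw.symm]

/-! ### funOf -/

theorem funOf_class_isSet (M a : ZFSet.{0}) :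
    ∃ z : ZFSet.{0}, z.toSet = {p | ∃ x, x ∈ a ∧ x ∈ M ∧ p = ZFSet.pair x (mos M x)} := by
  refine ⟨ZFSet.image (fun x => ZFSet.pair x (mos M x)) (ZFSet.sep (fun y => y ∈ M) a), ?_⟩
  ext z
  simp only [ZFSet.mem_toSet, ZFSet.mem_image, ZFSet.mem_sep, Set.mem_setOf_eq]
  constructor
  · rintro ⟨y, ⟨hy, hM⟩, rfl⟩; exact ⟨y, hy, hM, rfl⟩
  · rintro ⟨y, hy, hM, rfl⟩; exact ⟨y, ⟨hy, hM⟩, rfl⟩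

theorem mem_funOf {M a p : ZFSet.{0}} :
    p ∈ funOf M a ↔ ∃ x, x ∈ a ∧ x ∈ M ∧ p = ZFSet.pair x (mos M x) := by
  rw [funOf]; exact mem_zcode (funOf_class_isSet M a)

theorem pair_mem_funOf {M a x y : ZFSet.{0}} :
    ZFSet.pair x y ∈ funOf M a ↔ x ∈ a ∧ x ∈ M ∧ y = mos M x := by
  rw [mem_funOf]
  constructor
  · rintro ⟨x', hx', hM', hp⟩
    obtain ⟨rfl, rfl⟩ := ZFSet.pair_injective hp
    exact ⟨hx', hM', rfl⟩
  · rintro ⟨hx, hM, rfl⟩; exact ⟨x, hx, hM, rfl⟩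

end CSF
namespace CSF
set_option maxHeartbeats 1000000

/-! ### pair facts -/

theorem pair_eq (x y : ZFSet.{0}) : ZFSet.pair x y = {{x}, {x, y}} := rfl

theorem snd_mem_pair_aux {x y : ZFSet.{0}} : y ∈ ({x, y} : ZFSet) :=
  ZFSet.mem_pair.mpr (Or.inr rfl)

theorem fst_mem_pair_aux {x y : ZFSet.{0}} : x ∈ ({x} : ZFSet) :=
  ZFSet.mem_singleton.mpr rfl

/-! ### app -/

theorem pair_snd_mem {f x y : ZFSet.{0}} (h : ZFSet.pair x y ∈ f) : y ∈ ⋃₀ ⋃₀ f := by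
  have h1 : ({x, y} : ZFSet) ∈ (⋃₀ f : ZFSet) := by
    refine ZFSet.mem_sUnion_of_mem ?_ h
    rw [pair_eq]; exact ZFSet.mem_pair.mpr (Or.inr rfl)
  exact ZFSet.mem_sUnion_of_mem snd_mem_pair_aux h1

theorem pair_fst_mem {f x y : ZFSet.{0}} (h : ZFSet.pair x y ∈ f) : x ∈ ⋃₀ ⋃₀ f := by
  have h1 : ({x} : ZFSet) ∈ (⋃₀ f : ZFSet) := by
    refine ZFSet.mem_sUnion_of_mem ?_ h
    rw [pair_eq]; exact ZFSet.mem_pair.mpr (Or.inl rfl)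
  exact ZFSet.mem_sUnion_of_mem (ZFSet.mem_singleton.mpr rfl) h1

theorem mem_app {f x z : ZFSet.{0}} :
    z ∈ app f x ↔ ∃ y, ZFSet.pair x y ∈ f ∧ z ∈ y := by
  rw [app]
  refine mem_zcode (zcode_sub (w := ⋃₀ ⋃₀ ⋃₀ f) ?_)
  rintro z ⟨y, hpf, hzy⟩
  rw [ZFSet.mem_toSet]
  exact ZFSet.mem_sUnion_of_mem hzy (pair_snd_mem hpf)

theorem mem_zdom_of_app {f x z : ZFSet.{0}} (h : z ∈ app f x) : x ∈ zdom f := by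
  obtain ⟨y, hy, -⟩ := mem_app.mp h
  exact ⟨y, hy⟩

/-! ### zdomZ / zranZ -/

theorem mem_zdomZ {f x : ZFSet.{0}} :
    x ∈ zdomZ f ↔ ∃ y, ZFSet.pair x y ∈ f := by
  rw [zdomZ]
  refine mem_zcode (zcode_sub (w := ⋃₀ ⋃₀ f) ?_)
  rintro x ⟨y, hpf⟩
  rw [ZFSet.mem_toSet]
  exact pair_fst_mem hpf

theorem mem_zranZ {f y : ZFSet.{0}} :
    y ∈ zranZ f ↔ ∃ x, ZFSet.pair x y ∈ f := by
  rw [zranZ]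
  refine mem_zcode (zcode_sub (w := ⋃₀ ⋃₀ f) ?_)
  rintro y ⟨x, hpf⟩
  rw [ZFSet.mem_toSet]
  exact pair_snd_mem hpf

/-! ### restr -/

theorem mem_restr {f a p : ZFSet.{0}} :
    p ∈ restr f a ↔ p ∈ f ∧ ∃ x y, x ∈ a ∧ p = ZFSet.pair x y := by
  rw [restr]
  refine mem_zcode (zcode_sub (w := f) ?_)
  rintro p ⟨hp, -⟩
  rwa [ZFSet.mem_toSet]

theorem restr_funOf (M b a : ZFSet.{0}) :
    restr (funOf M b) a = funOf M (b ∩ a) := by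
  apply ZFSet.ext; intro p
  rw [mem_restr, mem_funOf, mem_funOf]
  constructor
  · rintro ⟨⟨x, hxb, hxM, rfl⟩, x', y', hx'a, hp⟩
    obtain ⟨rfl, rfl⟩ := ZFSet.pair_injective hp
    exact ⟨x, ZFSet.mem_inter.mpr ⟨hxb, hx'a⟩, hxM, rfl⟩
  · rintro ⟨x, hx, hxM, rfl⟩
    obtain ⟨hxb, hxa⟩ := ZFSet.mem_inter.mp hx
    exact ⟨⟨x, hxb, hxM, rfl⟩, x, mos M x, hxa, rfl⟩

theorem funOf_congr_dom {M a b : ZFSet.{0}} (h : ∀ x, (x ∈ a ∧ x ∈ M) ↔ (x ∈ b ∧ x ∈ M)) :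
    funOf M a = funOf M b := by
  apply ZFSet.ext; intro p
  rw [mem_funOf, mem_funOf]
  constructor
  · rintro ⟨x, hx, hxM, rfl⟩
    exact ⟨x, ((h x).mp ⟨hx, hxM⟩).1, hxM, rfl⟩
  · rintro ⟨x, hx, hxM, rfl⟩
    exact ⟨x, ((h x).mpr ⟨hx, hxM⟩).1, hxM, rfl⟩

theorem restr_funOf_of_subset {M b a : ZFSet.{0}} (hab : a ⊆ b) :
    restr (funOf M b) a = funOf M a := by
  rw [restr_funOf]
  exact funOf_congr_dom fun x => by
    constructor
    · rintro ⟨hx, hM⟩; exact ⟨(ZFSet.mem_inter.mp hx).2, hM⟩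
    · rintro ⟨hx, hM⟩; exact ⟨ZFSet.mem_inter.mpr ⟨hab hx, hx⟩, hM⟩

theorem app_funOf {M a x : ZFSet.{0}} (hx : x ∈ a) (hM : x ∈ M) :
    app (funOf M a) x = mos M x := by
  apply ZFSet.ext; intro z
  rw [mem_app]
  constructor
  · rintro ⟨y, hy, hzy⟩
    obtain ⟨-, -, rfl⟩ := pair_mem_funOf.mp hy
    exact hzy
  · intro hz
    exact ⟨mos M x, pair_mem_funOf.mpr ⟨hx, hM, rfl⟩, hz⟩

theorem app_funOf_not {M a x : ZFSet.{0}} (hx : ¬(x ∈ a ∧ x ∈ M)) :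
    app (funOf M a) x = ∅ := by
  apply ZFSet.ext; intro z
  rw [mem_app]
  simp only [ZFSet.notMem_empty, iff_false]
  rintro ⟨y, hy, -⟩
  obtain ⟨h1, h2, -⟩ := pair_mem_funOf.mp hy
  exact hx ⟨h1, h2⟩

/-! ### trcl -/

theorem mem_trcl {a x : ZFSet.{0}} : x ∈ trcl a ↔ ∃ n : ℕ, x ∈ itUnion n a := by
  rw [trcl]
  refine mem_zcode ⟨⋃₀ (ZFSet.range.{0,0} fun n : ℕ => itUnion n a), ?_⟩
  ext y
  simp only [ZFSet.mem_toSet, ZFSet.mem_sUnion, ZFSet.mem_range, Set.mem_range,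
    Set.mem_setOf_eq]
  constructor
  · rintro ⟨z, ⟨n, rfl⟩, hy⟩; exact ⟨n, hy⟩
  · rintro ⟨n, hy⟩; exact ⟨itUnion n a, ⟨n, rfl⟩, hy⟩

theorem subset_trcl (a : ZFSet.{0}) : a ⊆ trcl a := fun x hx =>
  mem_trcl.mpr ⟨0, hx⟩

theorem trcl_trans {a x y : ZFSet.{0}} (hx : x ∈ trcl a) (hy : y ∈ x) : y ∈ trcl a := by
  obtain ⟨n, hn⟩ := mem_trcl.mp hx
  exact mem_trcl.mpr ⟨n + 1, ZFSet.mem_sUnion_of_mem hy hn⟩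

/-! ### restriction stays in O -/

theorem extensional_inter_trcl {M : ZFSet.{0}} (hM : Extensional M) (a : ZFSet.{0}) :
    Extensional (M ∩ trcl a) := by
  intro x hx y hy hxy
  obtain ⟨hxM, hxt⟩ := ZFSet.mem_inter.mp hx
  obtain ⟨hyM, hyt⟩ := ZFSet.mem_inter.mp hy
  refine hM x hxM y hyM fun z hz => ?_
  constructor
  · intro hzx
    exact ((hxy z (ZFSet.mem_inter.mpr ⟨hz, trcl_trans hxt hzx⟩)).mp hzx)
  · intro hzy
    exact ((hxy z (ZFSet.mem_inter.mpr ⟨hz, trcl_trans hyt hzy⟩)).mpr hzy)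

theorem mos_inter_trcl {M a : ZFSet.{0}} :
    ∀ x, x ∈ trcl a → mos.{0,0} (M ∩ trcl a) x = mos.{0,0} M x := by
  intro x
  induction x using ZFSet.inductionOn with
  | _ x IH =>
    intro hxt
    apply ZFSet.ext; intro z
    rw [mem_mos, mem_mos]
    constructor
    · rintro ⟨y, hyx, hyM, rfl⟩
      exact ⟨y, hyx, (ZFSet.mem_inter.mp hyM).1, (IH y hyx (trcl_trans hxt hyx))⟩
    · rintro ⟨y, hyx, hyM, rfl⟩
      have hyt := trcl_trans hxt hyx
      exact ⟨y, hyx, ZFSet.mem_inter.mpr ⟨hyM, hyt⟩, (IH y hyx hyt).symm⟩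

theorem funOf_inter_trcl {M a : ZFSet.{0}} :
    funOf M a = funOf (M ∩ trcl a) a := by
  apply ZFSet.ext; intro p
  rw [mem_funOf, mem_funOf]
  constructor
  · rintro ⟨x, hx, hxM, rfl⟩
    have hxt : x ∈ trcl a := subset_trcl a hx
    exact ⟨x, hx, ZFSet.mem_inter.mpr ⟨hxM, hxt⟩, by rw [mos_inter_trcl x hxt]⟩
  · rintro ⟨x, hx, hxM, rfl⟩
    have hxt : x ∈ trcl a := subset_trcl a hx
    exact ⟨x, hx, (ZFSet.mem_inter.mp hxM).1, by rw [mos_inter_trcl x hxt]⟩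

/-- Elements of `O b` are `funOf M b` for some extensional `M` (trcl condition dropped). -/
theorem O_elim {b f : ZFSet.{0}} (hf : f ∈ O b) :
    ∃ M : ZFSet.{0}, Extensional M ∧ f = funOf M b := by
  obtain ⟨M, -, hext, rfl⟩ := hf
  exact ⟨M, hext, rfl⟩

theorem funOf_mem_O {M a : ZFSet.{0}} (hM : Extensional M) : funOf M a ∈ O a :=
  ⟨M ∩ trcl a, fun _ h => (ZFSet.mem_inter.mp h).2, extensional_inter_trcl hM a,
    funOf_inter_trcl⟩

theorem restr_mem_O {f b a : ZFSet.{0}} (hf : f ∈ O b) (hab : a ⊆ b) :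
    restr f a ∈ O a := by
  obtain ⟨M, hext, rfl⟩ := O_elim hf
  rw [restr_funOf_of_subset hab]
  exact funOf_mem_O hext

end CSF
namespace CSF
set_option maxHeartbeats 1000000

/-! ### small ZFSet helpers -/

theorem sub_union_left {a b : ZFSet.{0}} : a ⊆ a ∪ b := fun z hz =>
  ZFSet.mem_union.mpr (Or.inl hz)

theorem sub_union_right {a b : ZFSet.{0}} : b ⊆ a ∪ b := fun z hz =>
  ZFSet.mem_union.mpr (Or.inr hz)

theorem singleton_sub {y b : ZFSet.{0}} (h : y ∈ b) : ({y} : ZFSet) ⊆ b := fun z hz => by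
  rwa [ZFSet.mem_singleton.mp hz]

theorem union_empty' (c : ZFSet.{0}) : c ∪ (∅ : ZFSet) = c := by
  apply ZFSet.ext; intro z
  rw [ZFSet.mem_union]
  simp [ZFSet.notMem_empty]

theorem mem_self_singleton (x : ZFSet.{0}) : x ∈ ({x} : ZFSet) :=
  ZFSet.mem_singleton.mpr rfl

/-! ### zdom of funOf -/

theorem zdom_funOf {M a x : ZFSet.{0}} :
    x ∈ zdom (funOf M a) ↔ x ∈ a ∧ x ∈ M := by
  constructor
  · rintro ⟨y, hy⟩
    have h := pair_mem_funOf.mp hy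
    exact ⟨h.1, h.2.1⟩
  · rintro ⟨h1, h2⟩
    exact ⟨mos M x, pair_mem_funOf.mpr ⟨h1, h2, rfl⟩⟩

/-! ### O-level operation lemmas -/

theorem O_restr_restr {f b : ZFSet.{0}} (hf : f ∈ O b) {a c : ZFSet.{0}} (hca : c ⊆ a) :
    restr (restr f a) c = restr f c := by
  obtain ⟨M, -, rfl⟩ := O_elim hf
  rw [restr_funOf, restr_funOf, restr_funOf]
  apply funOf_congr_dom
  intro x
  simp only [ZFSet.mem_inter]
  constructor
  · rintro ⟨⟨⟨h1, -⟩, h3⟩, h4⟩; exact ⟨⟨h1, h3⟩, h4⟩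
  · rintro ⟨⟨h1, h3⟩, h4⟩; exact ⟨⟨⟨h1, hca h3⟩, h3⟩, h4⟩

theorem O_app_restr {f b : ZFSet.{0}} (hf : f ∈ O b) {a x : ZFSet.{0}} (hx : x ∈ a) :
    app (restr f a) x = app f x := by
  obtain ⟨M, -, rfl⟩ := O_elim hf
  rw [restr_funOf]
  by_cases h : x ∈ b ∧ x ∈ M
  · rw [app_funOf (ZFSet.mem_inter.mpr ⟨h.1, hx⟩) h.2, app_funOf h.1 h.2]
  · rw [app_funOf_not, app_funOf_not h]
    rintro ⟨h1, h2⟩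
    exact h ⟨(ZFSet.mem_inter.mp h1).1, h2⟩

theorem O_restr_self {f a : ZFSet.{0}} (hf : f ∈ O a) : restr f a = f := by
  obtain ⟨M, -, rfl⟩ := O_elim hf
  rw [restr_funOf]
  apply funOf_congr_dom
  intro x
  simp only [ZFSet.mem_inter]
  tauto

/-! ### filter-level lemmas -/

variable {C : Set ZFSet.{0}} {F : ZFSet.{0} → Set (Set ZFSet.{0})}

theorem F_of_not_diff (hS : IsCSystemOfUltrafilters C F) {a : ZFSet.{0}} {A : Set ZFSet.{0}}
    (ha : a ∈ C) (hA : A ⊆ O a) (h : (O a \ A) ∉ F a) : A ∈ F a :=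
  (hS.ultra a ha A hA).resolve_right h

theorem not_diff_of_F (hS : IsCSystemOfUltrafilters C F) {a : ZFSet.{0}} {A : Set ZFSet.{0}}
    (ha : a ∈ C) (h : A ∈ F a) : (O a \ A) ∉ F a := by
  intro hd
  have h2 := hS.inter_mem a ha A h _ hd
  have : A ∩ (O a \ A) = (∅ : Set ZFSet.{0}) := by
    ext f; simp only [Set.mem_inter_iff, Set.mem_diff, Set.mem_empty_iff_false, iff_false]
    tauto
  rw [this] at h2
  exact hS.empty_not_mem a ha h2

theorem F_nonempty (hS : IsCSystemOfUltrafilters C F) {a : ZFSet.{0}} {A : Set ZFSet.{0}}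
    (ha : a ∈ C) (h : A ∈ F a) : ∃ f, f ∈ A := by
  by_contra hc
  push_neg at hc
  have : A = (∅ : Set ZFSet.{0}) := Set.eq_empty_iff_forall_notMem.mpr hc
  rw [this] at h
  exact hS.empty_not_mem a ha h

theorem transfer_up (hS : IsCSystemOfUltrafilters C F) {a b : ZFSet.{0}} {A : Set ZFSet.{0}}
    (ha : a ∈ C) (hb : b ∈ C) (hab : a ⊆ b) (hA : A ⊆ O a) (h : A ∈ F a) :
    {f | f ∈ O b ∧ restr f a ∈ A} ∈ F b :=
  (hS.compat a ha b hb hab A hA).mp h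

theorem transfer_down (hS : IsCSystemOfUltrafilters C F) {a b : ZFSet.{0}} {A : Set ZFSet.{0}}
    (ha : a ∈ C) (hb : b ∈ C) (hab : a ⊆ b) (hA : A ⊆ O a) {B : Set ZFSet.{0}}
    (hB : B ∈ F b) (h : ∀ f ∈ B, restr f a ∈ A) : A ∈ F a := by
  apply (hS.compat a ha b hb hab A hA).mpr
  exact hS.superset_mem b hb B hB _
    (fun f hf => ⟨hS.sets_subset b hb B hB hf, h f hf⟩) (fun f hf => hf.1)

theorem inter_mem' (hS : IsCSystemOfUltrafilters C F) {b : ZFSet.{0}} (hb : b ∈ C)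
    {A B : Set ZFSet.{0}} (hA : A ∈ F b) (hB : B ∈ F b) : A ∩ B ∈ F b :=
  hS.inter_mem b hb A hA B hB

end CSF
namespace CSF
set_option maxHeartbeats 4000000

theorem zranZ_funOf {M e y : ZFSet.{0}} :
    y ∈ zranZ (funOf M e) ↔ ∃ x, x ∈ e ∧ x ∈ M ∧ y = mos M x := by
  rw [mem_zranZ]
  constructor
  · rintro ⟨x, hx⟩
    obtain ⟨h1, h2, h3⟩ := pair_mem_funOf.mp hx
    exact ⟨x, h1, h2, h3⟩
  · rintro ⟨x, h1, h2, rfl⟩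
    exact ⟨x, pair_mem_funOf.mpr ⟨h1, h2, rfl⟩⟩

theorem zdomZ_funOf {M e x : ZFSet.{0}} :
    x ∈ zdomZ (funOf M e) ↔ x ∈ e ∧ x ∈ M := by
  rw [mem_zdomZ]
  constructor
  · rintro ⟨y, hy⟩
    obtain ⟨h1, h2, -⟩ := pair_mem_funOf.mp hy
    exact ⟨h1, h2⟩
  · rintro ⟨h1, h2⟩
    exact ⟨mos M x, pair_mem_funOf.mpr ⟨h1, h2, rfl⟩⟩

/-- First projection of a Kuratowski pair. -/
def zfst (p : ZFSet.{0}) : ZFSet.{0} :=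
  zcode {z | ∃ x y, p = ZFSet.pair x y ∧ z ∈ x}

theorem zfst_pair (x y : ZFSet.{0}) : zfst (ZFSet.pair x y) = x := by
  rw [zfst]
  have h : {z | ∃ x' y', ZFSet.pair x y = ZFSet.pair x' y' ∧ z ∈ x'} = x.toSet := by
    ext z
    simp only [Set.mem_setOf_eq, ZFSet.mem_toSet]
    constructor
    · rintro ⟨x', y', hp, hz⟩
      obtain ⟨rfl, rfl⟩ := ZFSet.pair_injective hp
      exact hz
    · intro hz
      exact ⟨x, y, rfl, hz⟩
  rw [h, zcode_of_toSet]

variable {C : Set ZFSet.{0}} {F : ZFSet.{0} → Set (Set ZFSet.{0})}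

/-- If `u (f ↾ c) = f(y)` on a large set of `f ∈ O b`, then `(c, u) =_S proj_y`. -/
theorem eq_proj_of_val (hS : IsCSystemOfUltrafilters C F) {c b y : ZFSet.{0}}
    {u : ZFSet.{0} → ZFSet.{0}} {B : Set ZFSet.{0}}
    (hcC : c ∈ C) (hbC : b ∈ C) (hcb : c ⊆ b) (hyb : y ∈ b) (hyC : ({y} : ZFSet) ∈ C)
    (hB : B ∈ F b) (hBO : B ⊆ O b)
    (hval : ∀ f ∈ B, u (restr f c) = app f y) :
    eqU F (c, u) (projRep y) := by
  simp only [eqU, projRep]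
  have heC : c ∪ {y} ∈ C := hS.directed.union_mem c hcC _ hyC
  have heb : c ∪ {y} ⊆ b := by
    intro z hz
    rcases ZFSet.mem_union.mp hz with h | h
    · exact hcb h
    · rwa [ZFSet.mem_singleton.mp h]
  have hye : y ∈ c ∪ {y} := sub_union_right (mem_self_singleton y)
  refine transfer_down hS heC hbC heb (fun f hf => hf.1) hB ?_
  intro f hf
  have hfO := hBO hf
  refine ⟨restr_mem_O hfO heb, ?_⟩
  rw [O_restr_restr hfO sub_union_left]
  rw [O_restr_restr hfO (singleton_sub hye)]
  rw [O_app_restr hfO (mem_self_singleton y)]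
  exact hval f hf

end CSF
namespace CSF
set_option maxHeartbeats 4000000

variable {C : Set ZFSet.{0}} {F : ZFSet.{0} → Set (Set ZFSet.{0})}

theorem part1 (hS : IsCSystemOfUltrafilters C F) :
    ∀ x : ZFSet.{0}, ({x} : ZFSet) ∈ C → ∀ p : PreU, p.1 ∈ C →
      (memU F p (projRep x) ↔ ∃ y, y ∈ x ∧ eqU F p (projRep y)) := by
  rintro x hxC ⟨c, u⟩ hcC
  simp only [memU, projRep, eqU]
  set d : ZFSet.{0} := c ∪ {x} with hd_def
  have hdC : d ∈ C := hS.directed.union_mem c hcC _ hxC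
  have hcd : c ⊆ d := sub_union_left
  have hxd : x ∈ d := sub_union_right (mem_self_singleton x)
  constructor
  · -- forward
    intro hA
    set A : Set ZFSet.{0} := {f | f ∈ O d ∧ u (restr f c) ∈ app (restr f {x}) x} with hA_def
    have hAO : A ⊆ O d := fun f hf => hf.1
    -- normality
    obtain ⟨b, hbC, hdb, B, hBsub, hBnd, y, hyb, hval⟩ :=
      hS.normality d hdC A hAO (not_diff_of_F hS hdC hA)
        (fun g => u (restr g c))
        (by
          rintro f ⟨hfO, hfm⟩
          have hx' : app (restr f {x}) x = app f x :=
            O_app_restr hfO (mem_self_singleton x)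
          rw [hx'] at hfm
          exact ⟨x, mem_zdom_of_app hfm, Or.inr hfm⟩)
    have hBO : B ⊆ O b := fun f hf => (hBsub hf).1
    have hB : B ∈ F b := F_of_not_diff hS hbC hBO hBnd
    have hxb : x ∈ b := hdb hxd
    -- value identity on B
    have hval' : ∀ f ∈ B, u (restr f c) = app f y := by
      intro f hf
      have h1 := hval f hf
      rwa [O_restr_restr (hBO hf) hcd] at h1
    -- membership identity on B
    have hmem' : ∀ f ∈ B, u (restr f c) ∈ app f x := by
      intro f hf
      have h1 := (hBsub hf).2
      obtain ⟨h1O, h1m⟩ := h1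
      rw [O_restr_restr (hBO hf) (singleton_sub hxd)] at h1m
      rw [O_app_restr (hBO hf) (mem_self_singleton x)] at h1m
      rwa [O_restr_restr (hBO hf) hcd] at h1m
    -- find a single f knowing x and y
    have hfx : {f | f ∈ O b ∧ x ∈ zdom f} ∈ F b := hS.fineness b hbC x hxb
    have hfy : {f | f ∈ O b ∧ y ∈ zdom f} ∈ F b := hS.fineness b hbC y hyb
    obtain ⟨f0, ⟨⟨hf0B, -, hf0x⟩, -, hf0y⟩⟩ :=
      F_nonempty hS hbC (inter_mem' hS hbC (inter_mem' hS hbC hB hfx) hfy)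
    obtain ⟨M, hMext, hf0⟩ := O_elim (hBO hf0B)
    subst hf0
    obtain ⟨-, hxM⟩ := zdom_funOf.mp hf0x
    obtain ⟨-, hyM⟩ := zdom_funOf.mp hf0y
    have h2 : mos M y ∈ mos M x := by
      have e1 := hval' _ hf0B
      have e2 := hmem' _ hf0B
      rw [e1] at e2
      rwa [app_funOf hxb hxM, app_funOf hyb hyM] at e2
    obtain ⟨w, hwx, hwM, hw⟩ := mem_mos.mp h2
    have hyx : y ∈ x := by
      rw [mos_inj hMext y hyM w hwM hw] ; exact hwx
    -- {y} ∈ C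
    have hyC : ({y} : ZFSet) ∈ C :=
      hS.directed.transitive {x} hxC x (mem_self_singleton x) y hyx
    refine ⟨y, hyx, ?_⟩
    -- eqU (c,u) (projRep y)
    set e : ZFSet.{0} := c ∪ {y} with he_def
    have heC : e ∈ C := hS.directed.union_mem c hcC _ hyC
    have heb : e ⊆ b := by
      intro z hz
      rcases ZFSet.mem_union.mp hz with h | h
      · exact hdb (hcd h)
      · rwa [ZFSet.mem_singleton.mp h]
    have hye : y ∈ e := sub_union_right (mem_self_singleton y)
    refine transfer_down hS heC hbC heb (fun f hf => hf.1) hB ?_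
    intro f hf
    have hfO := hBO hf
    have hre : restr f e ∈ O e := restr_mem_O hfO heb
    refine ⟨hre, ?_⟩
    rw [O_restr_restr hfO sub_union_left]
    rw [O_restr_restr hfO (singleton_sub hye)]
    rw [O_app_restr hfO (mem_self_singleton y)]
    exact hval' f hf
  · -- backward
    rintro ⟨y, hyx, hE⟩
    have hyC : ({y} : ZFSet) ∈ C :=
      hS.directed.transitive {x} hxC x (mem_self_singleton x) y hyx
    set e : ZFSet.{0} := c ∪ {y} with he_def
    have heC : e ∈ C := hS.directed.union_mem c hcC _ hyC
    set b : ZFSet.{0} := d ∪ {y} with hb_def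
    have hbC : b ∈ C := hS.directed.union_mem d hdC _ hyC
    have hdb : d ⊆ b := sub_union_left
    have hyb : y ∈ b := sub_union_right (mem_self_singleton y)
    have hxb : x ∈ b := hdb hxd
    have heb : e ⊆ b := by
      intro z hz
      rcases ZFSet.mem_union.mp hz with h | h
      · exact hdb (hcd h)
      · rwa [ZFSet.mem_singleton.mp h]
    have hye : y ∈ e := sub_union_right (mem_self_singleton y)
    have hG := transfer_up hS heC hbC heb (fun f hf => hf.1) hE
    have hfx : {f | f ∈ O b ∧ x ∈ zdom f} ∈ F b := hS.fineness b hbC x hxb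
    have hfy : {f | f ∈ O b ∧ y ∈ zdom f} ∈ F b := hS.fineness b hbC y hyb
    have hH := inter_mem' hS hbC (inter_mem' hS hbC hG hfx) hfy
    refine transfer_down hS hdC hbC (by intro z hz; exact sub_union_left hz)
      (fun f hf => hf.1) hH ?_
    rintro f ⟨⟨⟨hfO, hfe⟩, -, hfzx⟩, -, hfzy⟩
    obtain ⟨M, hMext, rfl⟩ := O_elim hfO
    obtain ⟨-, hxM⟩ := zdom_funOf.mp hfzx
    obtain ⟨-, hyM⟩ := zdom_funOf.mp hfzy
    set f := funOf M b
    have hfO' : f ∈ O b := hfO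
    obtain ⟨hreO, hrem⟩ := hfe
    have hre : restr f e ∈ O e := restr_mem_O hfO' heb
    rw [O_restr_restr hfO' sub_union_left,
        O_restr_restr hfO' (singleton_sub hye),
        O_app_restr hfO' (mem_self_singleton y)] at hrem
    -- hrem : u (restr f c) = app f y
    have hmm : u (restr f c) ∈ app f x := by
      rw [hrem, app_funOf hxb hxM, app_funOf hyb hyM]
      exact mem_mos.mpr ⟨y, hyx, hyM, rfl⟩
    have hrd : restr f d ∈ O d := restr_mem_O hfO' hdb
    refine ⟨hrd, ?_⟩
    rw [O_restr_restr hfO' hcd,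
        O_restr_restr hfO' (singleton_sub hxd),
        O_app_restr hfO' (mem_self_singleton x)]
    exact hmm

end CSF
namespace CSF
set_option maxHeartbeats 4000000

variable {C : Set ZFSet.{0}} {F : ZFSet.{0} → Set (Set ZFSet.{0})}

theorem part2 (hS : IsCSystemOfUltrafilters C F) :
    ∀ a ∈ C, ∀ p : PreU, p.1 ∈ C →
      (memU F p (a, fun f => zranZ f) ↔ ∃ y, y ∈ a ∧ eqU F p (projRep y)) := by
  rintro a haC ⟨c, u⟩ hcC
  simp only [memU]
  set d : ZFSet.{0} := c ∪ a with hd_def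
  have hdC : d ∈ C := hS.directed.union_mem c hcC a haC
  have hcd : c ⊆ d := sub_union_left
  have had : a ⊆ d := sub_union_right
  constructor
  · -- forward
    intro hA
    set A : Set ZFSet.{0} := {f | f ∈ O d ∧ u (restr f c) ∈ zranZ (restr f a)} with hA_def
    have hAO : A ⊆ O d := fun f hf => hf.1
    obtain ⟨b, hbC, hdb, B, hBsub, hBnd, y, hyb, hval⟩ :=
      hS.normality d hdC A hAO (not_diff_of_F hS hdC hA)
        (fun g => u (restr g c))
        (by
          rintro f ⟨hfO, hfm⟩
          obtain ⟨M, hMext, rfl⟩ := O_elim hfO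
          rw [restr_funOf] at hfm
          obtain ⟨x0, hx0, hx0M, hx0e⟩ := zranZ_funOf.mp hfm
          have hx0d : x0 ∈ d := (ZFSet.mem_inter.mp hx0).1
          refine ⟨x0, zdom_funOf.mpr ⟨hx0d, hx0M⟩, Or.inl ?_⟩
          rw [app_funOf hx0d hx0M]
          exact hx0e)
    have hBO : B ⊆ O b := fun f hf => (hBsub hf).1
    have hB : B ∈ F b := F_of_not_diff hS hbC hBO hBnd
    have hval' : ∀ f ∈ B, u (restr f c) = app f y := by
      intro f hf
      have h1 := hval f hf
      rwa [O_restr_restr (hBO hf) hcd] at h1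
    -- identify y ∈ a
    have hfy : {f | f ∈ O b ∧ y ∈ zdom f} ∈ F b := hS.fineness b hbC y hyb
    obtain ⟨f0, hf0B, -, hf0y⟩ :=
      F_nonempty hS hbC (inter_mem' hS hbC hB hfy)
    obtain ⟨M, hMext, hf0⟩ := O_elim (hBO hf0B)
    obtain ⟨-, hyM⟩ := zdom_funOf.mp (hf0 ▸ hf0y)
    have hra : restr (restr f0 d) a = restr f0 a := O_restr_restr (hBO hf0B) had
    have hmem0 := (hBsub hf0B).2.2
    rw [hra] at hmem0
    rw [O_restr_restr (hBO hf0B) hcd] at hmem0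
    rw [hval' f0 hf0B] at hmem0
    rw [hf0, restr_funOf] at hmem0
    rw [app_funOf hyb hyM] at hmem0
    obtain ⟨w, hw, hwM, hwe⟩ := zranZ_funOf.mp hmem0
    have hya : y ∈ a := by
      rw [mos_inj hMext y hyM w hwM hwe]
      exact (ZFSet.mem_inter.mp hw).2
    have hyC : ({y} : ZFSet) ∈ C :=
      hS.directed.subset_mem a haC {y} (singleton_sub hya)
    exact ⟨y, hya, eq_proj_of_val hS hcC hbC (fun z hz => hdb (hcd hz)) hyb hyC hB hBO hval'⟩
  · -- backward
    rintro ⟨y, hya, hE⟩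
    simp only [eqU, projRep] at hE
    have hyC : ({y} : ZFSet) ∈ C :=
      hS.directed.subset_mem a haC {y} (singleton_sub hya)
    have heC : c ∪ {y} ∈ C := hS.directed.union_mem c hcC _ hyC
    have hyd : y ∈ d := had hya
    have hed : c ∪ {y} ⊆ d := by
      intro z hz
      rcases ZFSet.mem_union.mp hz with h | h
      · exact hcd h
      · rw [ZFSet.mem_singleton.mp h]; exact hyd
    have hye : y ∈ c ∪ {y} := sub_union_right (mem_self_singleton y)
    have hG := transfer_up hS heC hdC hed (fun f hf => hf.1) hE
    have hfy : {f | f ∈ O d ∧ y ∈ zdom f} ∈ F d := hS.fineness d hdC y hyd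
    have hH := inter_mem' hS hdC hG hfy
    refine hS.superset_mem d hdC _ hH _ ?_ (fun f hf => hf.1)
    rintro f ⟨⟨hfO, -, hrem⟩, -, hfzy⟩
    obtain ⟨M, hMext, rfl⟩ := O_elim hfO
    obtain ⟨-, hyM⟩ := zdom_funOf.mp hfzy
    rw [O_restr_restr hfO sub_union_left,
        O_restr_restr hfO (singleton_sub hye),
        O_app_restr hfO (mem_self_singleton y)] at hrem
    refine ⟨hfO, ?_⟩
    rw [hrem, app_funOf hyd hyM, restr_funOf]
    exact zranZ_funOf.mpr ⟨y, ZFSet.mem_inter.mpr ⟨hyd, hya⟩, hyM, rfl⟩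

end CSF
namespace CSF
set_option maxHeartbeats 4000000

variable {C : Set ZFSet.{0}} {F : ZFSet.{0} → Set (Set ZFSet.{0})}

theorem part3 (hS : IsCSystemOfUltrafilters C F) :
    ∀ a ∈ C, ∀ p : PreU, p.1 ∈ C →
      (memU F p (a, fun f => zdomZ f) ↔ ∃ x, x ∈ a ∧ eqU F p (jrep x)) := by
  rintro a haC ⟨c, u⟩ hcC
  simp only [memU, eqU, jrep, union_empty']
  set d : ZFSet.{0} := c ∪ a with hd_def
  have hdC : d ∈ C := hS.directed.union_mem c hcC a haC
  have hcd : c ⊆ d := sub_union_left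
  have had : a ⊆ d := sub_union_right
  constructor
  · -- forward
    intro hA
    set A : Set ZFSet.{0} := {f | f ∈ O d ∧ u (restr f c) ∈ zdomZ (restr f a)} with hA_def
    have hAO : A ⊆ O d := fun f hf => hf.1
    obtain ⟨b, hbC, hdb, B, hBsub, hBnd, y, hyb, hval⟩ :=
      hS.normality d hdC A hAO (not_diff_of_F hS hdC hA)
        (fun g => app g (u (restr g c)))
        (by
          rintro f ⟨hfO, hfm⟩
          obtain ⟨M, hMext, rfl⟩ := O_elim hfO
          rw [restr_funOf] at hfm
          obtain ⟨hx0, hx0M⟩ := zdomZ_funOf.mp hfm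
          have hx0d : u (restr (funOf M d) c) ∈ d := (ZFSet.mem_inter.mp hx0).1
          exact ⟨u (restr (funOf M d) c), zdom_funOf.mpr ⟨hx0d, hx0M⟩, Or.inl rfl⟩)
    have hBO : B ⊆ O b := fun f hf => (hBsub hf).1
    have hB : B ∈ F b := F_of_not_diff hS hbC hBO hBnd
    have hfy : {f | f ∈ O b ∧ y ∈ zdom f} ∈ F b := hS.fineness b hbC y hyb
    have hH := inter_mem' hS hbC hB hfy
    -- on B ∩ fine(y), u (restr f c) = y
    have hkey : ∀ f, f ∈ B → f ∈ {f | f ∈ O b ∧ y ∈ zdom f} →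
        u (restr f c) = y ∧ u (restr f c) ∈ a := by
      rintro f hfB ⟨hfO, hfzy⟩
      obtain ⟨M, hMext, rfl⟩ := O_elim hfO
      obtain ⟨-, hyM⟩ := zdom_funOf.mp hfzy
      obtain ⟨-, hmemA⟩ := hBsub hfB
      obtain ⟨-, hmem⟩ := hmemA
      rw [O_restr_restr hfO had, O_restr_restr hfO hcd, restr_funOf] at hmem
      obtain ⟨hx0, hx0M⟩ := zdomZ_funOf.mp hmem
      obtain ⟨hx0b, hx0a⟩ := ZFSet.mem_inter.mp hx0
      have h1 := hval _ hfB
      rw [O_restr_restr hfO hcd] at h1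
      rw [O_app_restr hfO (had hx0a)] at h1
      rw [app_funOf hx0b hx0M, app_funOf hyb hyM] at h1
      have := mos_inj hMext _ hx0M _ hyM h1
      rw [this] at hx0a ⊢
      exact ⟨rfl, hx0a⟩
    obtain ⟨f0, hf0B, hf0y⟩ := F_nonempty hS hbC hH
    have hya : y ∈ a := by
      obtain ⟨h1, h2⟩ := hkey f0 hf0B hf0y
      rwa [h1] at h2
    refine ⟨y, hya, ?_⟩
    refine transfer_down hS hcC hbC (fun z hz => hdb (hcd hz)) (fun f hf => hf.1) hH ?_
    rintro f ⟨hfB, hfy'⟩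
    have hfO := hBO hfB
    have hrc : restr f c ∈ O c := restr_mem_O hfO (fun z hz => hdb (hcd hz))
    refine ⟨hrc, ?_⟩
    rw [O_restr_self hrc]
    exact (hkey f hfB hfy').1
  · -- backward
    rintro ⟨x, hxa, hE⟩
    have hxd : x ∈ d := had hxa
    have hG := transfer_up hS hcC hdC hcd (fun f hf => hf.1) hE
    have hfx : {f | f ∈ O d ∧ x ∈ zdom f} ∈ F d := hS.fineness d hdC x hxd
    have hH := inter_mem' hS hdC hG hfx
    refine hS.superset_mem d hdC _ hH _ ?_ (fun f hf => hf.1)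
    rintro f ⟨⟨hfO, hrcO, hrem⟩, -, hfzx⟩
    obtain ⟨M, hMext, rfl⟩ := O_elim hfO
    obtain ⟨-, hxM⟩ := zdom_funOf.mp hfzx
    rw [O_restr_self (restr_mem_O hfO hcd)] at hrem
    refine ⟨hfO, ?_⟩
    rw [hrem, restr_funOf]
    exact zdomZ_funOf.mpr ⟨ZFSet.mem_inter.mpr ⟨hxd, hxa⟩, hxM⟩

end CSF
namespace CSF
set_option maxHeartbeats 4000000

variable {C : Set ZFSet.{0}} {F : ZFSet.{0} → Set (Set ZFSet.{0})}

theorem part4 (hS : IsCSystemOfUltrafilters C F) :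
    ∀ a ∈ C, ∀ p : PreU, p.1 ∈ C →
      (memU F p (a, fun f => f) ↔
        ∃ x, x ∈ a ∧ eqU F p ({x}, fun f => ZFSet.pair x (app f x))) := by
  rintro a haC ⟨c, u⟩ hcC
  simp only [memU, eqU]
  set d : ZFSet.{0} := c ∪ a with hd_def
  have hdC : d ∈ C := hS.directed.union_mem c hcC a haC
  have hcd : c ⊆ d := sub_union_left
  have had : a ⊆ d := sub_union_right
  constructor
  · -- forward
    intro hA
    set A : Set ZFSet.{0} := {f | f ∈ O d ∧ u (restr f c) ∈ restr f a} with hA_def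
    have hAO : A ⊆ O d := fun f hf => hf.1
    obtain ⟨b, hbC, hdb, B, hBsub, hBnd, y, hyb, hval⟩ :=
      hS.normality d hdC A hAO (not_diff_of_F hS hdC hA)
        (fun g => app g (zfst (u (restr g c))))
        (by
          rintro f ⟨hfO, hfm⟩
          obtain ⟨M, hMext, rfl⟩ := O_elim hfO
          rw [restr_funOf] at hfm
          obtain ⟨x0, hx0, hx0M, hx0e⟩ := mem_funOf.mp hfm
          have hx0d : x0 ∈ d := (ZFSet.mem_inter.mp hx0).1
          refine ⟨x0, zdom_funOf.mpr ⟨hx0d, hx0M⟩, Or.inl ?_⟩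
          show app (funOf M d) (zfst (u (restr (funOf M d) c))) = app (funOf M d) x0
          rw [hx0e, zfst_pair])
    have hBO : B ⊆ O b := fun f hf => (hBsub hf).1
    have hB : B ∈ F b := F_of_not_diff hS hbC hBO hBnd
    have hfy : {f | f ∈ O b ∧ y ∈ zdom f} ∈ F b := hS.fineness b hbC y hyb
    have hH := inter_mem' hS hbC hB hfy
    -- key: on B ∩ fine(y), u (restr f c) = pair y (app f y), and y ∈ a
    have hkey : ∀ f, f ∈ B → f ∈ {f | f ∈ O b ∧ y ∈ zdom f} →
        u (restr f c) = ZFSet.pair y (app f y) ∧ y ∈ a := by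
      rintro f hfB ⟨hfO, hfzy⟩
      obtain ⟨M, hMext, rfl⟩ := O_elim hfO
      obtain ⟨-, hyM⟩ := zdom_funOf.mp hfzy
      obtain ⟨-, hmemA⟩ := hBsub hfB
      obtain ⟨-, hmem⟩ := hmemA
      rw [O_restr_restr hfO had, O_restr_restr hfO hcd, restr_funOf] at hmem
      obtain ⟨x0, hx0, hx0M, hx0e⟩ := mem_funOf.mp hmem
      obtain ⟨hx0b, hx0a⟩ := ZFSet.mem_inter.mp hx0
      have h1 := hval _ hfB
      rw [O_restr_restr hfO hcd, hx0e, zfst_pair] at h1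
      rw [O_app_restr hfO (had hx0a)] at h1
      rw [app_funOf hx0b hx0M, app_funOf hyb hyM] at h1
      have hxy := mos_inj hMext _ hx0M _ hyM h1
      subst hxy
      refine ⟨?_, hx0a⟩
      rw [hx0e, app_funOf hyb hyM]
    obtain ⟨f0, hf0B, hf0y⟩ := F_nonempty hS hbC hH
    have hya : y ∈ a := (hkey f0 hf0B hf0y).2
    have hyC : ({y} : ZFSet) ∈ C :=
      hS.directed.subset_mem a haC {y} (singleton_sub hya)
    refine ⟨y, hya, ?_⟩
    have heC : c ∪ {y} ∈ C := hS.directed.union_mem c hcC _ hyC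
    have heb : c ∪ {y} ⊆ b := by
      intro z hz
      rcases ZFSet.mem_union.mp hz with h | h
      · exact hdb (hcd h)
      · rwa [ZFSet.mem_singleton.mp h]
    have hye : y ∈ c ∪ {y} := sub_union_right (mem_self_singleton y)
    refine transfer_down hS heC hbC heb (fun f hf => hf.1) hH ?_
    rintro f ⟨hfB, hfy'⟩
    have hfO := hBO hfB
    refine ⟨restr_mem_O hfO heb, ?_⟩
    rw [O_restr_restr hfO sub_union_left]
    rw [O_restr_restr hfO (singleton_sub hye)]
    rw [O_app_restr hfO (mem_self_singleton y)]
    exact (hkey f hfB hfy').1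
  · -- backward
    rintro ⟨x, hxa, hE⟩
    have hxC : ({x} : ZFSet) ∈ C :=
      hS.directed.subset_mem a haC {x} (singleton_sub hxa)
    have heC : c ∪ {x} ∈ C := hS.directed.union_mem c hcC _ hxC
    have hxd : x ∈ d := had hxa
    have hed : c ∪ {x} ⊆ d := by
      intro z hz
      rcases ZFSet.mem_union.mp hz with h | h
      · exact hcd h
      · rw [ZFSet.mem_singleton.mp h]; exact hxd
    have hxe : x ∈ c ∪ {x} := sub_union_right (mem_self_singleton x)
    have hG := transfer_up hS heC hdC hed (fun f hf => hf.1) hE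
    have hfx : {f | f ∈ O d ∧ x ∈ zdom f} ∈ F d := hS.fineness d hdC x hxd
    have hH := inter_mem' hS hdC hG hfx
    refine hS.superset_mem d hdC _ hH _ ?_ (fun f hf => hf.1)
    rintro f ⟨⟨hfO, -, hrem⟩, -, hfzx⟩
    obtain ⟨M, hMext, rfl⟩ := O_elim hfO
    obtain ⟨-, hxM⟩ := zdom_funOf.mp hfzx
    rw [O_restr_restr hfO sub_union_left,
        O_restr_restr hfO (singleton_sub hxe),
        O_app_restr hfO (mem_self_singleton x)] at hrem
    refine ⟨hfO, ?_⟩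
    rw [hrem, app_funOf hxd hxM, restr_funOf]
    exact mem_funOf.mpr ⟨x, ZFSet.mem_inter.mpr ⟨hxd, hxa⟩, hxM, rfl⟩

end CSF



set_option maxHeartbeats 1000000

open CSF

/-- Canonical representatives in the ultrapower `Ult(V,S)` of a `C`-system of
ultrafilters, characterized extensionally (via the identification of the well-founded
part with its collapse): (1) `proj_x : f ↦ f(x)` represents `x`; (2) `ran_a : f ↦ ran(f)`
represents `a`; (3) `dom_a : f ↦ dom(f)` represents `j[a]`; (4) `id_a` represents
`(j ↾ a)⁻¹`, whose elements are the pairs `⟨j(x), x⟩` for `x ∈ a`. -/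
theorem stmt_9 (C : Set ZFSet) (F : ZFSet → Set (Set ZFSet))
    (hS : IsCSystemOfUltrafilters C F) (h0 : (∅ : ZFSet) ∈ C) :
    -- (1) `[proj_x]_S = x` for `x ∈ ⋃C`
    (∀ x : ZFSet, ({x} : ZFSet) ∈ C → ∀ p : PreU, p.1 ∈ C →
      (memU F p (projRep x) ↔ ∃ y, y ∈ x ∧ eqU F p (projRep y))) ∧
    -- (2) `[ran_a]_S = a` for `a ∈ C`
    (∀ a ∈ C, ∀ p : PreU, p.1 ∈ C →
      (memU F p (a, fun f => zranZ f) ↔ ∃ y, y ∈ a ∧ eqU F p (projRep y))) ∧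
    -- (3) `[dom_a]_S = j[a]` for `a ∈ C`
    (∀ a ∈ C, ∀ p : PreU, p.1 ∈ C →
      (memU F p (a, fun f => zdomZ f) ↔ ∃ x, x ∈ a ∧ eqU F p (jrep x))) ∧
    -- (4) `[id_a]_S = (j ↾ a)⁻¹` for `a ∈ C`
    (∀ a ∈ C, ∀ p : PreU, p.1 ∈ C →
      (memU F p (a, fun f => f) ↔
        ∃ x, x ∈ a ∧ eqU F p ({x}, fun f => ZFSet.pair x (app f x)))) := by
  exact ⟨part1 hS, part2 hS, part3 hS, part4 hS⟩
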